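/- Let G be a group, A a subset of G, and consider the set (1−A) = { 1 − a : a ∈ A } inside the integral group ring ℤ[G]. If g ∈ G is such that (1 − g) lies in the right ℤ[G]-submodule of ℤ[G] generated by (1−A), then g lies in the subgroup of G generated by A. -/

import Mathlib

/-- If `1 - g` lies in the right `ℤ[G]`-submodule of `ℤ[G]`
generated by `{1 - a : a ∈ A}`, then `g` lies in the subgroup generated by `A`. -/
theorem stmt_0 {G : Type*} [Group G] (A : Set G) (g : G)
    (h : (1 - MonoidAlgebra.of ℤ G g) ∈
      Submodule.span (MonoidAlgebra ℤ G)ᵐᵒᵖ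
        ((fun a => (1 : MonoidAlgebra ℤ G) - MonoidAlgebra.of ℤ G a) '' A)) :
    g ∈ Subgroup.closure A := by
  set H := Subgroup.closure A with hH
  set π : G → G ⧸ H := fun u => ((u⁻¹ : G) : G ⧸ H) with hπ
  set φ : MonoidAlgebra ℤ G →ₗ[ℤ] (G ⧸ H →₀ ℤ) := Finsupp.lmapDomain ℤ ℤ π ∘ₗ (MonoidAlgebra.coeffLinearEquiv ℤ).toLinearMap with hφ
  have eSingle : ∀ (u : G) (d : ℤ),
      φ (MonoidAlgebra.single u d) = Finsupp.single (π u) d := fun u d =>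
    Finsupp.mapDomain_single
  have eOf : ∀ u : G, φ (MonoidAlgebra.of ℤ G u) = Finsupp.single (π u) 1 := fun u =>
    eSingle u 1
  have eOne : φ (1 : MonoidAlgebra ℤ G) = Finsupp.single (π 1) 1 := by
    rw [← map_one (MonoidAlgebra.of ℤ G)]; exact eOf 1
  have hcoset : ∀ u t : G, π (u * t) = t⁻¹ • π u := by
    intro u t
    simp [hπ, mul_inv_rev, MulAction.Quotient.smul_mk]
  have key : ∀ (x : MonoidAlgebra ℤ G) (t : G),
      φ (x * MonoidAlgebra.of ℤ G t) =
        Finsupp.mapDomain (fun q => t⁻¹ • q) (φ x) := by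
    intro x t
    induction x using MonoidAlgebra.induction_on with
    | of u =>
      rw [← map_mul, eOf, eOf, Finsupp.mapDomain_single, hcoset]
    | add x y hx hy =>
      rw [add_mul, map_add, hx, hy, map_add, Finsupp.mapDomain_add]
    | smul r x hx =>
      rw [smul_mul_assoc, map_smul, hx, map_smul, Finsupp.mapDomain_smul]
  have hzero : φ (1 - MonoidAlgebra.of ℤ G g) = 0 := by
    refine Submodule.span_induction ?_ ?_ ?_ ?_ h
    · rintro x ⟨a, ha, rfl⟩
      have hpa : π a = π 1 := by
        simp only [hπ, inv_one]
        exact (QuotientGroup.eq).2 (by simpa using inv_mem (Subgroup.subset_closure ha))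
      rw [map_sub, eOne, eOf, hpa, sub_self]
    · simp
    · intro x y _ _ hx hy
      rw [map_add, hx, hy, add_zero]
    · intro m x _ hx
      have hm : m • x = x * m.unop := rfl
      rw [hm]
      induction m.unop using MonoidAlgebra.induction_on with
      | of t => rw [key, hx]; simp
      | add y z hy hz => rw [mul_add, map_add, hy, hz, add_zero]
      | smul r y hy => rw [mul_smul_comm, map_smul, hy, smul_zero]
  have hsing : Finsupp.single (π 1) (1 : ℤ) = Finsupp.single (π g) 1 := by
    have h2 := hzero
    rw [map_sub, eOne, eOf, sub_eq_zero] at h2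
    exact h2
  have hpq : π 1 = π g := Finsupp.single_left_injective one_ne_zero hsing
  have hg : g⁻¹ ∈ H := by
    have := (QuotientGroup.eq).1 (by simpa [hπ] using hpq)
    simpa using this
  simpa using inv_mem hg
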